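/- arXiv:0802.3260 — 3 statements merged into one kernel-verified Lean document; each statement's English description precedes it below -/
import Mathlib

section
/- Let x and x' be extended alcoves for GL_n. If r_{ij}(x) = r_{ij}(x') for all residues i, j ∈ ℤ/nℤ, then x = x'. (That is, an extended alcove is uniquely determined by the tuple of its invariants r_{ij}.) -/
open Finset

/-- Elements of `ℤⁿ`; the coordinate `v(j)` for `1 ≤ j ≤ n` is `v ⟨j-1, _⟩`. -/
abbrev Vec (n : ℕ) := Fin n → ℤ

/-- The extension of a tuple `(x_0, …, x_{n-1})` by `x_n := x_0 - (1,…,1)`. -/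
def xext (n : ℕ) [NeZero n] (x : Fin n → Vec n) (m : ℕ) : Vec n :=
  if h : m < n then x ⟨m, h⟩ else fun j => x ⟨0, Nat.pos_of_ne_zero (NeZero.ne n)⟩ j - 1

/-- An extended alcove for `GL_n`: setting `x_n := x_0 - (1,…,1)`, for each
`i ∈ {0,…,n-1}` there is exactly one coordinate `j` with `x_{i+1}(j) = x_i(j) - 1`,
and `x_{i+1}(j') = x_i(j')` for all other coordinates `j'`. -/
def IsExtendedAlcove (n : ℕ) [NeZero n] (x : Fin n → Vec n) : Prop :=
  ∀ i : Fin n, ∃! j : Fin n,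
    xext n x ((i : ℕ) + 1) j = xext n x (i : ℕ) j - 1 ∧
      ∀ j' : Fin n, j' ≠ j → xext n x ((i : ℕ) + 1) j' = xext n x (i : ℕ) j'

/-- The standard alcove `ω`: `ω_i(j) = -1` for `j ≤ i` and `ω_i(j) = 0` for `j > i`
(coordinates `j ∈ {1,…,n}`). -/
def stdAlc (n : ℕ) (i : ℕ) : Vec n := fun j => if (j : ℕ) + 1 ≤ i then -1 else 0

/-- `μ`-permissibility for `μ = (1^{(r)}, 0^{(n-r)})`:
`ω_i ≤ x_i ≤ ω_i + (1,…,1)` componentwise, and `Σ_j x_i(j) = n - r - i`. -/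
def IsMuPermissible (n : ℕ) (r : ℕ) (x : Fin n → Vec n) : Prop :=
  ∀ i : Fin n,
    (∀ j, stdAlc n (i : ℕ) j ≤ x i j ∧ x i j ≤ stdAlc n (i : ℕ) j + 1) ∧
    (∑ j, x i j) = (n : ℤ) - (r : ℤ) - ((i : ℕ) : ℤ)

/-- The cyclic interval `(j, i] = {j+1, j+2, …, i} ⊆ ℤ/nℤ`; it is all of `ℤ/nℤ` when `i = j`. -/
def cycInt (n : ℕ) [NeZero n] (j i : ZMod n) : Finset (ZMod n) :=
  (Finset.Icc 1 (if i = j then n else (i - j).val)).image fun m : ℕ => j + (m : ZMod n)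

/-- The `Fin n`-index of the coordinate `∈ {1,…,n}` representing the residue `k ∈ ℤ/nℤ`. -/
def toIdx (n : ℕ) [NeZero n] (k : ZMod n) : Fin n := ⟨(k - 1).val, ZMod.val_lt _⟩

/-- The invariant `r_{ij}(x) = Σ_{k ∈ (j,i]} (ω_i(k) - x_i(k) + 1)` for residues
`i, j ∈ ℤ/nℤ`, the subscript `i` being taken via its representative in `{0,…,n-1}`. -/
def rInv (n : ℕ) [NeZero n] (x : Fin n → Vec n) (i j : ZMod n) : ℤ :=
  ∑ k ∈ cycInt n j i,
    (stdAlc n i.val (toIdx n k) - x ⟨i.val, ZMod.val_lt i⟩ (toIdx n k) + 1)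


lemma cast_sub_one' (n : ℕ) (hn : 2 ≤ n) : ((n - 1 : ℕ) : ZMod n) = -1 := by
  rw [Nat.cast_sub (by omega), ZMod.natCast_self, Nat.cast_one, zero_sub]

lemma val_neg_one' (n : ℕ) (hn : 2 ≤ n) [NeZero n] : (-1 : ZMod n).val = n - 1 := by
  rw [← cast_sub_one' n hn, ZMod.val_natCast_of_lt (by omega)]

lemma sum_cycInt {n : ℕ} [NeZero n] (f : ZMod n → ℤ) (j i : ZMod n) :
    ∑ k ∈ cycInt n j i, f k
      = ∑ m ∈ Finset.range (if i = j then n else (i - j).val),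
          f (j + 1 + (m : ZMod n)) := by
  unfold cycInt
  have hLn : (if i = j then n else (i - j).val) ≤ n := by
    split
    · exact le_rfl
    · exact le_of_lt (ZMod.val_lt _)
  rw [Finset.sum_image]
  · rw [← Finset.Ico_add_one_right_eq_Icc, Finset.sum_Ico_eq_sum_range, Nat.add_sub_cancel]
    refine Finset.sum_congr rfl fun m _ => ?_
    congr 1
    push_cast
    ring
  · intro a ha b hb hab
    simp only [Finset.mem_coe, Finset.mem_Icc] at ha hb
    have hab' : (a : ZMod n) = b := add_left_cancel hab
    have hv : a % n = b % n := by
      have := congrArg ZMod.val hab'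
      simpa [ZMod.val_natCast] using this
    have ha' := ha.2.trans hLn
    have hb' := hb.2.trans hLn
    rcases ha'.lt_or_eq with h1 | h1 <;> rcases hb'.lt_or_eq with h2 | h2
    · rwa [Nat.mod_eq_of_lt h1, Nat.mod_eq_of_lt h2] at hv
    · rw [Nat.mod_eq_of_lt h1, h2, Nat.mod_self] at hv; omega
    · rw [h1, Nat.mod_self, Nat.mod_eq_of_lt h2] at hv; omega
    · omega

lemma cyc_sums_determine {n : ℕ} (hn : 2 ≤ n) [NeZero n] (i : ZMod n)
    (f g : ZMod n → ℤ)
    (h : ∀ j, ∑ k ∈ cycInt n j i, f k = ∑ k ∈ cycInt n j i, g k)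
    (k : ZMod n) : f k = g k := by
  haveI : Fact (1 < n) := ⟨hn⟩
  have hone : (1 : ZMod n) ≠ 0 := by
    intro h10
    have := congrArg ZMod.val h10
    rw [ZMod.val_one, ZMod.val_zero] at this
    exact one_ne_zero this
  by_cases hk : k = i
  · subst hk
    have h1 := h (k - 1)
    rw [sum_cycInt, sum_cycInt] at h1
    have hcond : ¬ (k = k - 1) := fun heq => hone (by linear_combination heq)
    rw [if_neg hcond] at h1
    have he : (k - (k - 1)) = 1 := by ring
    rw [he, ZMod.val_one] at h1
    simpa using h1
  · have h1 := h (k - 1)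
    have h2 := h k
    rw [sum_cycInt, sum_cycInt] at h1 h2
    rw [if_neg (fun h' => hk h'.symm)] at h2
    set L : ℕ := (i - k).val with hL
    have hcastL : ((L : ℕ) : ZMod n) = i - k := ZMod.natCast_rightInverse _
    have hLlt : L < n := ZMod.val_lt _
    have hL1 : (if i = k - 1 then n else (i - (k - 1)).val) = L + 1 := by
      by_cases hik : i = k - 1
      · rw [if_pos hik]
        have hik' : i - k = -1 := by rw [hik]; ring
        rw [hL, hik', val_neg_one' n hn]
        omega
      · rw [if_neg hik]
        have hne : i - k ≠ -1 := by
          intro hm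
          exact hik (by linear_combination hm)
        have hvne : L ≠ n - 1 := by
          intro hv
          apply hne
          rw [← hcastL, hv, cast_sub_one' n hn]
        have hlt : L + 1 < n := by omega
        have : i - (k - 1) = ((L + 1 : ℕ) : ZMod n) := by
          push_cast
          rw [hcastL]
          ring
        rw [this, ZMod.val_natCast_of_lt hlt]
    rw [hL1] at h1
    have reindex : ∀ F : ZMod n → ℤ,
        ∑ m ∈ Finset.range (L + 1), F (k - 1 + 1 + (m : ZMod n))
          = (∑ m ∈ Finset.range L, F (k + 1 + (m : ZMod n))) + F k := by
      intro F
      rw [Finset.sum_range_succ']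
      congr 1
      · refine Finset.sum_congr rfl fun m _ => ?_
        congr 1
        push_cast
        ring
      · congr 1
        push_cast
        ring
    rw [reindex f, reindex g] at h1
    rw [h2] at h1
    linarith

/-- An extended alcove for `GL_n` is uniquely determined by the tuple of its
invariants `(r_{ij}(x))_{i,j ∈ ℤ/nℤ}`. -/
theorem extended_alcove_determined_by_invariants
    (n : ℕ) (hn : 2 ≤ n) [NeZero n] (x x' : Fin n → Vec n)
    (hx : IsExtendedAlcove n x) (hx' : IsExtendedAlcove n x')
    (h : ∀ i j : ZMod n, rInv n x i j = rInv n x' i j) :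
    x = x' := by
  funext p q
  set i : ZMod n := ((p : ℕ) : ZMod n) with hi
  have hival : i.val = (p : ℕ) := ZMod.val_natCast_of_lt p.isLt
  have hpi : (⟨i.val, ZMod.val_lt i⟩ : Fin n) = p := Fin.ext hival
  set k : ZMod n := ((q : ℕ) : ZMod n) + 1 with hk
  have hkq : toIdx n k = q := by
    apply Fin.ext
    show (k - 1).val = (q : ℕ)
    rw [hk, add_sub_cancel_right, ZMod.val_natCast_of_lt q.isLt]
  have key := cyc_sums_determine hn i
    (fun c => stdAlc n i.val (toIdx n c) - x ⟨i.val, ZMod.val_lt i⟩ (toIdx n c) + 1)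
    (fun c => stdAlc n i.val (toIdx n c) - x' ⟨i.val, ZMod.val_lt i⟩ (toIdx n c) + 1)
    (fun j => h i j) k
  simp only [hkq, hpi] at key
  linarith
end

section
/- Let x be a μ-permissible extended alcove for GL_n, and let i, j ∈ {0,…,n−1}. Set j' = j if i > j, and j' = j − n otherwise, and extend ω to negative indices by ω_{m−n} := ω_m + 𝟏. Then r_{ij}(x) equals the number of indices k ∈ {1,…,n} with x_i(k) < ω_{j'}(k), and moreover this number equals the number of such k lying in the cyclic interval (j,i] ⊆ ℤ/nℤ. -/
open Finset

lemma toIdx_injective (n : ℕ) [NeZero n] : Function.Injective (toIdx n) := by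
  intro a b h
  have h1 : (a - 1).val = (b - 1).val := congrArg Fin.val h
  have h2 : a - 1 = b - 1 := ZMod.val_injective n h1
  have := congrArg (· + 1) h2
  simpa using this

lemma modChar (n j M : ℕ) (hn0 : 0 < n) (hj : j < n) (hMn : M ≤ n) (k : ℕ) (hk : k < n) :
    (∃ m, 1 ≤ m ∧ m ≤ M ∧ (j + m - 1) % n = k) ↔ (k + n - j) % n < M := by
  have hmod : (k + n - j) % n = if j ≤ k then k - j else k + n - j := by
    split_ifs with h
    · have e : k + n - j = (k - j) + n := by omega
      rw [e, Nat.add_mod_right, Nat.mod_eq_of_lt (by omega)]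
    · rw [Nat.mod_eq_of_lt (by omega)]
  rw [hmod]
  constructor
  · rintro ⟨m, h1, h2, h3⟩
    rcases Nat.lt_or_ge (j + m - 1) n with h | h
    · rw [Nat.mod_eq_of_lt h] at h3
      split_ifs <;> omega
    · rw [Nat.mod_eq_sub_mod h, Nat.mod_eq_of_lt (by omega)] at h3
      split_ifs <;> omega
  · intro h
    split_ifs at h with hc
    · refine ⟨k - j + 1, by omega, by omega, ?_⟩
      have e : j + (k - j + 1) - 1 = k := by omega
      rw [e, Nat.mod_eq_of_lt hk]
    · refine ⟨k + n - j + 1, by omega, by omega, ?_⟩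
      have e : j + (k + n - j + 1) - 1 = k + n := by omega
      rw [e, Nat.add_mod_right, Nat.mod_eq_of_lt hk]

/-- For a `μ`-permissible extended alcove `x` for `GL_n` and `i, j ∈ {0,…,n-1}`, with
`j' = j` if `i > j` and `j' = j - n` otherwise (extending `ω` by `ω_{m-n} = ω_m + 1`),
the invariant `r_{ij}(x)` equals the number of coordinates `k ∈ {1,…,n}` with
`x_i(k) < ω_{j'}(k)`, and moreover this number equals the number of such `k` lying in
the cyclic interval `(j, i] ⊆ ℤ/nℤ`. -/
theorem rInv_eq_card_lt
    (n r : ℕ) (hn : 2 ≤ n) (hr0 : 0 < r) (hrn : r < n) [NeZero n]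
    (x : Fin n → Vec n) (hx : IsExtendedAlcove n x) (hperm : IsMuPermissible n r x)
    (i j : ℕ) (hi : i < n) (hj : j < n) :
    let ωj' : Vec n := if j < i then stdAlc n j else fun k => stdAlc n j k + 1
    rInv n x (i : ZMod n) (j : ZMod n) =
      ((Finset.univ.filter (fun k : Fin n => x ⟨i, hi⟩ k < ωj' k)).card : ℤ) ∧
    (Finset.univ.filter (fun k : Fin n => x ⟨i, hi⟩ k < ωj' k)).card =
      ((cycInt n (j : ZMod n) (i : ZMod n)).filter
        (fun kk : ZMod n => x ⟨i, hi⟩ (toIdx n kk) < ωj' (toIdx n kk))).card := by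
  intro ωj'
  classical
  have hn0 : 0 < n := by omega
  set Mnat : ℕ := (if i = j then n else if j < i then i - j else i + n - j) with hMdef
  have hMn : Mnat ≤ n := by rw [hMdef]; split_ifs <;> omega
  have hij : ((i : ZMod n) = (j : ZMod n)) ↔ i = j := by
    rw [ZMod.natCast_eq_natCast_iff', Nat.mod_eq_of_lt hi, Nat.mod_eq_of_lt hj]
  have hMeq : (if (i : ZMod n) = (j : ZMod n) then n else ((i : ZMod n) - (j : ZMod n)).val)
      = Mnat := by
    rw [hMdef]
    by_cases h : i = j
    · simp [h]
    · rw [if_neg (by simpa [hij]), if_neg h]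
      have hc : ((i + (n - j) : ℕ) : ZMod n) = (i : ZMod n) - (j : ZMod n) := by
        push_cast [Nat.cast_sub hj.le, ZMod.natCast_self]
        ring
      rw [← hc, ZMod.val_natCast]
      by_cases h2 : j < i
      · rw [if_pos h2]
        have e : i + (n - j) = (i - j) + n := by omega
        rw [e, Nat.add_mod_right, Nat.mod_eq_of_lt (by omega)]
      · rw [if_neg h2, Nat.mod_eq_of_lt (by omega)]
        omega
  have hkey : ∀ m : ℕ, 1 ≤ m →
      toIdx n ((j : ZMod n) + (m : ℕ)) = ⟨(j + m - 1) % n, Nat.mod_lt _ hn0⟩ := by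
    intro m hm
    have hc : ((j + m - 1 : ℕ) : ZMod n) = (j : ZMod n) + (m : ℕ) - 1 := by
      push_cast [Nat.cast_sub (show 1 ≤ j + m by omega)]
      ring
    apply Fin.ext
    show ((j : ZMod n) + (m : ℕ) - 1).val = (j + m - 1) % n
    rw [← hc, ZMod.val_natCast]
  set X : Vec n := x ⟨i, hi⟩ with hXdef
  have hbd : ∀ k0 : Fin n, stdAlc n i k0 ≤ X k0 ∧ X k0 ≤ stdAlc n i k0 + 1 :=
    (hperm ⟨i, hi⟩).1
  set I : Finset (Fin n) := (cycInt n (j : ZMod n) (i : ZMod n)).image (toIdx n) with hIdef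
  have hcyc : cycInt n (j : ZMod n) (i : ZMod n)
      = (Finset.Icc 1 Mnat).image (fun m : ℕ => (j : ZMod n) + (m : ZMod n)) := by
    rw [cycInt, hMeq]
  have hI : I = (Finset.Icc 1 Mnat).image (fun m : ℕ => toIdx n ((j : ZMod n) + (m : ℕ))) := by
    rw [hIdef, hcyc, Finset.image_image]
    rfl
  have hmem : ∀ k0 : Fin n, k0 ∈ I ↔ ((k0 : ℕ) + n - j) % n < Mnat := by
    intro k0
    rw [hI, Finset.mem_image, ← modChar n j Mnat hn0 hj hMn (k0 : ℕ) k0.isLt]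
    constructor
    · rintro ⟨m, hm, hmk⟩
      rw [Finset.mem_Icc] at hm
      refine ⟨m, hm.1, hm.2, ?_⟩
      rw [hkey m hm.1] at hmk
      exact congrArg Fin.val hmk
    · rintro ⟨m, h1, h2, h3⟩
      exact ⟨m, Finset.mem_Icc.mpr ⟨h1, h2⟩, by rw [hkey m h1]; exact Fin.ext h3⟩
  have hω : ∀ k0 : Fin n,
      ωj' k0 = (if (k0 : ℕ) + 1 ≤ j then (-1 : ℤ) else 0) + (if j < i then 0 else 1) := by
    intro k0
    show (if j < i then stdAlc n j else fun k => stdAlc n j k + 1) k0 = _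
    split_ifs with h <;> simp only [stdAlc] <;> split_ifs <;> omega
  have hC : ∀ k0 : Fin n, (X k0 < ωj' k0) ↔ (k0 ∈ I ∧ X k0 = stdAlc n i k0) := by
    intro k0
    have hb := hbd k0
    have hk0 := k0.isLt
    rw [hmem k0, hω k0]
    have hmod : ((k0 : ℕ) + n - j) % n
        = if j ≤ (k0 : ℕ) then (k0 : ℕ) - j else (k0 : ℕ) + n - j := by
      split_ifs with h
      · have e : (k0 : ℕ) + n - j = ((k0 : ℕ) - j) + n := by omega
        rw [e, Nat.add_mod_right, Nat.mod_eq_of_lt (by omega)]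
      · rw [Nat.mod_eq_of_lt (by omega)]
    rw [hmod, hMdef]
    simp only [stdAlc] at hb ⊢
    split_ifs at hb ⊢ <;> omega
  have hind : ∀ k0 : Fin n,
      stdAlc n i k0 - X k0 + 1 = if X k0 = stdAlc n i k0 then 1 else 0 := by
    intro k0
    have hb := hbd k0
    split_ifs with h <;> omega
  have hiz : ((i : ZMod n)).val = i := ZMod.val_cast_of_lt hi
  have hfin : (⟨((i : ZMod n)).val, ZMod.val_lt (i : ZMod n)⟩ : Fin n) = ⟨i, hi⟩ :=
    Fin.ext hiz
  have hsum : rInv n x (i : ZMod n) (j : ZMod n)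
      = ∑ k0 ∈ I, (stdAlc n i k0 - X k0 + 1) := by
    rw [rInv, hIdef,
      Finset.sum_image (fun a _ b _ h => toIdx_injective n h)]
    refine Finset.sum_congr rfl (fun κ _ => ?_)
    rw [hfin, hiz, ← hXdef]
  have hfilter : I.filter (fun k0 => X k0 < ωj' k0)
      = Finset.univ.filter (fun k0 => X k0 < ωj' k0) := by
    ext k0
    simp only [Finset.mem_filter, Finset.mem_univ, true_and]
    exact ⟨fun h => h.2, fun h => ⟨((hC k0).mp h).1, h⟩⟩
  have hcount : rInv n x (i : ZMod n) (j : ZMod n)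
      = ((I.filter (fun k0 => X k0 < ωj' k0)).card : ℤ) := by
    rw [hsum]
    have hbody : ∀ k0 ∈ I,
        stdAlc n i k0 - X k0 + 1 = if X k0 < ωj' k0 then 1 else 0 := by
      intro k0 hk0
      rw [hind k0]
      have hiff : (X k0 < ωj' k0) ↔ X k0 = stdAlc n i k0 :=
        ⟨fun h => ((hC k0).mp h).2, fun h => (hC k0).mpr ⟨hk0, h⟩⟩
      exact if_congr hiff.symm rfl rfl
    rw [Finset.sum_congr rfl hbody, Finset.sum_boole]
  constructor
  · rw [hcount, hfilter]
  · rw [← hfilter, hIdef, Finset.filter_image,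
      Finset.card_image_of_injective _ (toIdx_injective n)]
end

section
/- Let x and x' be μ-permissible extended alcoves for GSp_{2g}. Extend the invariants by setting r_{2g,j} := r_{0,j}. If r_{ij}(x) = r_{ij}(x') for all i ∈ {g, g+1, …, 2g} and all j ∈ {0, …, 2g−1} with i ≢ j (mod 2g), then x = x'. (That is, in the symplectic case the r_{ij} for g ≤ i ≤ 2g, 0 ≤ j ≤ 2g−1, i ≠ j determine the alcove uniquely.) -/
open Finset

/-- The duality condition defining extended alcoves for `GSp_n` (`n = 2g`):
`x_i(j) + x_{n-i}(n-j+1) = c - 1` for all `0 ≤ i ≤ n` and coordinates `j ∈ {1,…,n}`,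
where `x_n := x_0 - (1,…,1)`.  (An extended alcove for `GSp_{2g}` is an extended
alcove for `GL_{2g}` satisfying this condition for some constant `c = c(x)`.) -/
def IsSympDual (n : ℕ) [NeZero n] (x : Fin n → Vec n) (c : ℤ) : Prop :=
  ∀ i : ℕ, i ≤ n → ∀ j : Fin n, xext n x i j + xext n x (n - i) j.rev = c - 1

section Aux
variable {n : ℕ} [NeZero n]

lemma val_cast_back (a : ZMod n) : ((a.val : ℕ) : ZMod n) = a :=
  ZMod.natCast_rightInverse a

lemma val_one' (hn : 1 < n) : (1 : ZMod n).val = 1 := by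
  have : ((1 : ℕ) : ZMod n).val = 1 := ZMod.val_natCast_of_lt hn
  simpa using this

lemma mem_cycInt_of_ne {i j : ZMod n} (hij : i ≠ j) {k : ZMod n} :
    k ∈ cycInt n j i ↔ 1 ≤ (k - j).val ∧ (k - j).val ≤ (i - j).val := by
  simp only [cycInt, if_neg hij, mem_image, mem_Icc]
  constructor
  · rintro ⟨m, ⟨hm1, hm2⟩, rfl⟩
    have hmlt : m < n := lt_of_le_of_lt hm2 (ZMod.val_lt _)
    rw [add_sub_cancel_left, ZMod.val_natCast_of_lt hmlt]
    exact ⟨hm1, hm2⟩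
  · rintro ⟨h1, h2⟩
    exact ⟨(k - j).val, ⟨h1, h2⟩, by rw [val_cast_back]; ring⟩

lemma cycInt_self (i : ZMod n) : cycInt n i i = univ := by
  ext k
  simp only [cycInt, if_pos rfl, mem_image, mem_Icc, mem_univ, iff_true]
  by_cases hk : k = i
  · exact ⟨n, ⟨Nat.one_le_iff_ne_zero.2 (NeZero.ne n), le_refl n⟩,
      by rw [ZMod.natCast_self, add_zero, hk]⟩
  · refine ⟨(k - i).val, ⟨?_, le_of_lt (ZMod.val_lt _)⟩, by rw [val_cast_back]; ring⟩
    rw [Nat.one_le_iff_ne_zero]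
    intro h0
    exact hk (by have := (ZMod.val_eq_zero (k - i)).1 h0; rwa [sub_eq_zero] at this)

lemma notMem_cycInt {i k : ZMod n} (hk : k ≠ i) : k ∉ cycInt n k i := by
  rw [mem_cycInt_of_ne (fun h => hk h.symm)]
  simp

lemma neg_one_val (hn : 1 < n) : (-1 : ZMod n).val = n - 1 := by
  have : ((n - 1 : ℕ) : ZMod n) = -1 := by
    have : ((n - 1 : ℕ) : ZMod n) = (n : ZMod n) - 1 := by
      push_cast [Nat.cast_sub (le_of_lt hn)]; ring
    rw [this, ZMod.natCast_self]; ring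
  rw [← this, ZMod.val_natCast_of_lt (by omega)]

lemma insert_cycInt (hn : 1 < n) {i k : ZMod n} (hk : k ≠ i) :
    insert k (cycInt n k i) = cycInt n (k - 1) i := by
  have hki : i ≠ k := fun h => hk h.symm
  ext m
  by_cases h1 : i = k - 1
  · rw [← h1, cycInt_self]
    simp only [mem_univ, iff_true, mem_insert]
    by_cases hm : m = k
    · exact Or.inl hm
    · right
      rw [mem_cycInt_of_ne hki]
      constructor
      · rw [Nat.one_le_iff_ne_zero]
        intro h0
        exact hm (by have := (ZMod.val_eq_zero (m - k)).1 h0; rwa [sub_eq_zero] at this)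
      · have : i - k = -1 := by rw [h1]; ring
        rw [this, neg_one_val hn]
        have := ZMod.val_lt (m - k); omega
  · have h1' : i ≠ k - 1 := h1
    rw [mem_insert, mem_cycInt_of_ne hki, mem_cycInt_of_ne h1']
    have e1 : m - (k - 1) = (m - k) + 1 := by ring
    have e2 : i - (k - 1) = (i - k) + 1 := by ring
    set a := (m - k).val with ha
    set A := (i - k).val with hA
    have han : a < n := ZMod.val_lt _
    have hAn : A < n := ZMod.val_lt _
    have hA1 : 1 ≤ A := by
      rw [Nat.one_le_iff_ne_zero]
      intro h0
      exact hki (by have := (ZMod.val_eq_zero (i - k)).1 h0; rwa [sub_eq_zero] at this)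
    have hv1 : (1 : ZMod n).val = 1 := val_one' hn
    have hAne : A ≠ n - 1 := by
      intro hAe
      apply h1'
      have : ((i - k) + 1).val = 0 := by
        rw [ZMod.val_add, hv1, ← hA, hAe]
        have hnn : n - 1 + 1 = n := by omega
        rw [hnn, Nat.mod_self]
      have h0 : (i - k) + 1 = 0 := (ZMod.val_eq_zero _).1 this
      have : i - k = -1 := by linear_combination h0
      linear_combination this
    have hmk : m = k ↔ a = 0 := by
      rw [ha, ZMod.val_eq_zero, sub_eq_zero]
    rw [e1, e2, ZMod.val_add, ZMod.val_add, hv1, ← ha, ← hA, hmk]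
    have e4 : (A + 1) % n = A + 1 := Nat.mod_eq_of_lt (by omega)
    rcases Nat.lt_or_ge (a + 1) n with hlt | hge
    · have e3 : (a + 1) % n = a + 1 := Nat.mod_eq_of_lt hlt
      omega
    · have e3 : (a + 1) % n = 0 := by
        have han1 : a + 1 = n := by omega
        rw [han1, Nat.mod_self]
      omega

lemma cycInt_pred_self (hn : 1 < n) (i : ZMod n) : cycInt n (i - 1) i = {i} := by
  have h1 : i ≠ i - 1 := by
    intro h
    have h0 : (1 : ZMod n) = 0 := by linear_combination h
    have hv := val_one' hn
    rw [h0, ZMod.val_zero] at hv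
    omega
  ext m
  rw [mem_cycInt_of_ne h1, mem_singleton]
  have e : i - (i - 1) = 1 := by ring
  rw [e, val_one' hn]
  constructor
  · rintro ⟨ha, hb⟩
    have hv : (m - (i - 1)).val = 1 := le_antisymm hb ha
    have : m - (i - 1) = 1 := by
      rw [← val_cast_back (m - (i - 1)), hv]; simp
    linear_combination this
  · intro hm
    rw [hm]
    have e2 : i - (i - 1) = 1 := by ring
    rw [e2, val_one' hn]
    exact ⟨le_refl 1, le_refl 1⟩

lemma stdAlc_sum (n iv : ℕ) (hiv : iv ≤ n) : ∑ j : Fin n, stdAlc n iv j = -(iv : ℤ) := by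
  unfold stdAlc
  rw [Fin.sum_univ_eq_sum_range (fun m => if m + 1 ≤ iv then (-1 : ℤ) else 0) n]
  rw [Finset.sum_ite, Finset.sum_const, Finset.sum_const_zero, add_zero]
  have hf : Finset.filter (fun m => m + 1 ≤ iv) (Finset.range n) = Finset.range iv := by
    ext m; simp only [mem_filter, mem_range]; omega
  rw [hf, card_range]
  simp [nsmul_eq_mul]

lemma sum_toIdx (f : Fin n → ℤ) : ∑ k : ZMod n, f (toIdx n k) = ∑ j, f j := by
  have hinj : Function.Injective (toIdx n) := by
    intro a b hab
    have : (a - 1).val = (b - 1).val := congrArg Fin.val hab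
    have h2 : a - 1 = b - 1 := by
      rw [← val_cast_back (a - 1), ← val_cast_back (b - 1), this]
    linear_combination h2
  have hbij : Function.Bijective (toIdx n) := by
    have : Fintype.card (ZMod n) = Fintype.card (Fin n) := by
      simp [ZMod.card]
    exact (Fintype.bijective_iff_injective_and_card _).2 ⟨hinj, this⟩
  exact Fintype.sum_bijective (toIdx n) hbij _ f (fun k => rfl)

lemma rInv_self' (x : Fin n → Vec n) (i : ZMod n) :
    rInv n x i i = -(i.val : ℤ) + n - ∑ j, x ⟨i.val, ZMod.val_lt i⟩ j := by
  unfold rInv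
  rw [cycInt_self, sum_toIdx (fun j => stdAlc n i.val j - x ⟨i.val, ZMod.val_lt i⟩ j + 1)]
  rw [Finset.sum_add_distrib, Finset.sum_sub_distrib, Finset.sum_const, card_univ,
    Fintype.card_fin, stdAlc_sum n i.val (le_of_lt (ZMod.val_lt i))]
  push_cast
  ring

lemma rInv_step (hn : 1 < n) (x : Fin n → Vec n) (i k : ZMod n) (hk : k ≠ i) :
    rInv n x i (k - 1) =
      (stdAlc n i.val (toIdx n k) - x ⟨i.val, ZMod.val_lt i⟩ (toIdx n k) + 1) + rInv n x i k := by
  unfold rInv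
  rw [← insert_cycInt hn hk, Finset.sum_insert (notMem_cycInt hk)]

lemma rInv_pred (hn : 1 < n) (x : Fin n → Vec n) (i : ZMod n) :
    rInv n x i (i - 1) =
      stdAlc n i.val (toIdx n i) - x ⟨i.val, ZMod.val_lt i⟩ (toIdx n i) + 1 := by
  unfold rInv
  rw [cycInt_pred_self hn, Finset.sum_singleton]

lemma row_eq (hn : 1 < n) (x x' : Fin n → Vec n) (i : ZMod n)
    (hsum : ∑ j, x ⟨i.val, ZMod.val_lt i⟩ j = ∑ j, x' ⟨i.val, ZMod.val_lt i⟩ j)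
    (hr : ∀ j : ZMod n, j ≠ i → rInv n x i j = rInv n x' i j) :
    x ⟨i.val, ZMod.val_lt i⟩ = x' ⟨i.val, ZMod.val_lt i⟩ := by
  have hri : ∀ j : ZMod n, rInv n x i j = rInv n x' i j := by
    intro j
    by_cases hj : j = i
    · subst hj; rw [rInv_self', rInv_self', hsum]
    · exact hr j hj
  funext j
  have hk : toIdx n (((j : ℕ) : ZMod n) + 1) = j := by
    unfold toIdx
    apply Fin.ext
    simp only [add_sub_cancel_right]
    exact ZMod.val_natCast_of_lt j.isLt
  set k : ZMod n := ((j : ℕ) : ZMod n) + 1 with hkdef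
  by_cases hki : k = i
  · have h1 := rInv_pred hn x i
    have h2 := rInv_pred hn x' i
    rw [hki] at hk
    have e := hri (i - 1)
    rw [h1, h2, hk] at e
    linarith
  · have h1 := rInv_step hn x i k hki
    have h2 := rInv_step hn x' i k hki
    have e := hri (k - 1)
    rw [h1, h2, hri k, hk] at e
    linarith

end Aux

/-- A `μ`-permissible extended alcove for `GSp_{2g}` is uniquely determined by its
invariants `r_{ij}` for `g ≤ i ≤ 2g`, `0 ≤ j ≤ 2g-1`, `i ≢ j (mod 2g)`
(with the convention `r_{2g,j} = r_{0,j}`, which holds automatically for residues). -/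
theorem sympAlcove_determined_by_partial_invariants
    (g : ℕ) (hg : 1 ≤ g) [NeZero (2 * g)]
    (x x' : Fin (2 * g) → Vec (2 * g)) (c c' : ℤ)
    (halc : IsExtendedAlcove (2 * g) x)
    (hperm : IsMuPermissible (2 * g) g x)
    (hdual : IsSympDual (2 * g) x c)
    (halc' : IsExtendedAlcove (2 * g) x')
    (hperm' : IsMuPermissible (2 * g) g x')
    (hdual' : IsSympDual (2 * g) x' c')
    (h : ∀ i j : ℕ, g ≤ i → i ≤ 2 * g → j < 2 * g →
      (i : ZMod (2 * g)) ≠ (j : ZMod (2 * g)) →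
      rInv (2 * g) x (i : ZMod (2 * g)) (j : ZMod (2 * g)) =
        rInv (2 * g) x' (i : ZMod (2 * g)) (j : ZMod (2 * g))) :
    x = x' := by
  have hn2 : 1 < 2 * g := by omega
  have hrow : ∀ (m : ℕ) (hm : m < 2 * g), (m = 0 ∨ g ≤ m) →
      x ⟨m, hm⟩ = x' ⟨m, hm⟩ := by
    intro m hm hcase
    set i : ZMod (2 * g) := ((m : ℕ) : ZMod (2 * g)) with hidef
    have hv : i.val = m := ZMod.val_natCast_of_lt hm
    have hsum : ∑ j, x ⟨i.val, ZMod.val_lt i⟩ j = ∑ j, x' ⟨i.val, ZMod.val_lt i⟩ j :=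
      ((hperm ⟨i.val, ZMod.val_lt i⟩).2).trans ((hperm' ⟨i.val, ZMod.val_lt i⟩).2).symm
    have hr : ∀ jr : ZMod (2 * g), jr ≠ i →
        rInv (2 * g) x i jr = rInv (2 * g) x' i jr := by
      intro jr hj
      have hjv : ((jr.val : ℕ) : ZMod (2 * g)) = jr := val_cast_back jr
      rcases hcase with h0 | hgm
      · have hcast : ((2 * g : ℕ) : ZMod (2 * g)) = i := by
          rw [ZMod.natCast_self, hidef, h0, Nat.cast_zero]
        have hne : ((2 * g : ℕ) : ZMod (2 * g)) ≠ ((jr.val : ℕ) : ZMod (2 * g)) := by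
          rw [hcast, hjv]
          exact fun he => hj he.symm
        have := h (2 * g) jr.val (by omega) (le_refl _) (ZMod.val_lt jr) hne
        rwa [hcast, hjv] at this
      · have hne : ((m : ℕ) : ZMod (2 * g)) ≠ ((jr.val : ℕ) : ZMod (2 * g)) := by
          rw [← hidef, hjv]
          exact fun he => hj he.symm
        have := h m jr.val hgm (by omega) (ZMod.val_lt jr) hne
        rwa [← hidef, hjv] at this
    have hre := row_eq hn2 x x' i hsum hr
    have hfin : (⟨i.val, ZMod.val_lt i⟩ : Fin (2 * g)) = ⟨m, hm⟩ := Fin.ext hv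
    rwa [hfin] at hre
  have h0 : (0 : ℕ) < 2 * g := by omega
  have key : ∀ (y : Fin (2 * g) → Vec (2 * g)) (cc : ℤ), IsSympDual (2 * g) y cc →
      cc = y ⟨0, h0⟩ ⟨0, h0⟩ + y ⟨0, h0⟩ (Fin.rev ⟨0, h0⟩) := by
    intro y cc hd
    have d := hd 0 (Nat.zero_le _) ⟨0, h0⟩
    simp only [xext, Nat.sub_zero] at d
    rw [dif_pos h0, dif_neg (lt_irrefl (2 * g))] at d
    linarith
  have hx0 : x ⟨0, h0⟩ = x' ⟨0, h0⟩ := hrow 0 h0 (Or.inl rfl)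
  have hc : c = c' := by
    rw [key x c hdual, key x' c' hdual', hx0]
  funext i0
  rcases Nat.lt_or_ge (i0 : ℕ) g with hl | hge
  · rcases Nat.eq_zero_or_pos (i0 : ℕ) with h0v | hpos
    · have hi0 : i0 = ⟨0, h0⟩ := Fin.ext h0v
      rw [hi0]
      exact hx0
    · funext j
      have d1 := hdual (i0 : ℕ) (by omega) j
      have d2 := hdual' (i0 : ℕ) (by omega) j
      have hm' : 2 * g - (i0 : ℕ) < 2 * g := by omega
      simp only [xext] at d1 d2
      rw [dif_pos i0.isLt, dif_pos hm'] at d1 d2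
      have hmid := hrow (2 * g - (i0 : ℕ)) hm' (Or.inr (by omega))
      have heta : (⟨(i0 : ℕ), i0.isLt⟩ : Fin (2 * g)) = i0 := rfl
      rw [heta, hmid] at d1
      rw [heta] at d2
      have := congrFun hmid j.rev
      linarith
  · exact hrow (i0 : ℕ) i0.isLt (Or.inr hge)
end
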